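/- The regularized incomplete beta function (a, b) ↦ I_{1/2}(a, b), for a, b > 0, is nonincreasing in a and nondecreasing in b. Consequently, for s ∈ (0, T) with T = a + b fixed, s ↦ I_{1/2}(T − s, s) is nondecreasing in s. -/

import Mathlib

open MeasureTheory

/-- The (unregularized) incomplete beta integral `B(x; a, b)`. -/
noncomputable def incBeta (x a b : ℝ) : ℝ :=
  ∫ t in (0:ℝ)..x, t ^ (a - 1) * (1 - t) ^ (b - 1)

/-- The regularized incomplete beta function `I_x(a,b) = B(x;a,b)/B(a,b)`. -/
noncomputable def regIncBeta (x a b : ℝ) : ℝ := incBeta x a b / incBeta 1 a b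

section aux

lemma RIB.aeIoo {a b : ℝ} {p : ℝ → Prop} (h : ∀ x ∈ Set.Ioo a b, p x) :
    ∀ᵐ x ∂(volume.restrict (Set.Icc a b)), p x := by
  have h2 : ∀ᵐ x ∂(volume.restrict (Set.Icc a b)), x ∈ Set.Icc a b :=
    ae_restrict_mem measurableSet_Icc
  have hnull : (volume.restrict (Set.Icc a b)) ({a, b} : Set ℝ) = 0 := by
    refine le_antisymm ?_ (zero_le)
    calc (volume.restrict (Set.Icc a b)) ({a, b} : Set ℝ)
        ≤ volume ({a, b} : Set ℝ) := Measure.le_iff'.1 Measure.restrict_le_self _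
      _ = 0 := Set.Countable.measure_zero (Set.to_countable _) volume
  have h3 : ∀ᵐ x ∂(volume.restrict (Set.Icc a b)), x ∉ ({a, b} : Set ℝ) :=
    measure_eq_zero_iff_ae_notMem.mp hnull
  filter_upwards [h2, h3] with x hx hx'
  refine h x ⟨lt_of_le_of_ne hx.1 ?_, lt_of_le_of_ne hx.2 ?_⟩
  · exact fun e => hx' (by simp [← e])
  · exact fun e => hx' (by simp [e])

/-- integrability on [0, 1/2] -/
lemma RIB.intLeft {a b : ℝ} (ha : 0 < a) :
    IntervalIntegrable (fun t : ℝ => t ^ (a - 1) * (1 - t) ^ (b - 1)) volume 0 (1/2) := by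
  have h1 : IntervalIntegrable (fun t : ℝ => t ^ (a - 1)) volume 0 (1/2) :=
    intervalIntegral.intervalIntegrable_rpow' (by linarith)
  refine h1.mul_continuousOn ?_
  have : Set.uIcc (0:ℝ) (1/2) = Set.Icc 0 (1/2) := Set.uIcc_of_le (by norm_num)
  rw [this]
  refine ContinuousOn.rpow_const (by fun_prop) ?_
  intro x hx
  left
  simp only [Set.mem_Icc] at hx
  intro e; linarith [hx.2]

/-- integrability on [1/2, 1] -/
lemma RIB.intRight {a b : ℝ} (hb : 0 < b) :
    IntervalIntegrable (fun t : ℝ => t ^ (a - 1) * (1 - t) ^ (b - 1)) volume (1/2) 1 := by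
  have h1 : IntervalIntegrable (fun t : ℝ => t ^ (b - 1)) volume 0 (1/2) :=
    intervalIntegral.intervalIntegrable_rpow' (by linarith)
  have h2 : IntervalIntegrable (fun t : ℝ => (1 - t) ^ (b - 1)) volume (1 - 0) (1 - (1/2)) :=
    h1.comp_sub_left 1
  replace h2 := h2.symm
  norm_num at h2
  have h3 := h2.continuousOn_mul (g := fun t : ℝ => t ^ (a - 1)) ?_
  · exact h3
  · have : Set.uIcc (1/2 : ℝ) 1 = Set.Icc (1/2) 1 := Set.uIcc_of_le (by norm_num)
    rw [this]
    refine ContinuousOn.rpow_const (by fun_prop) ?_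
    intro x hx
    left
    simp only [Set.mem_Icc] at hx
    intro e; linarith [hx.1]

lemma RIB.key (g₁ g₂ : ℝ → ℝ)
    (h1a : IntervalIntegrable g₁ volume 0 (1/2)) (h1c : IntervalIntegrable g₁ volume (1/2) 1)
    (h2a : IntervalIntegrable g₂ volume 0 (1/2)) (h2c : IntervalIntegrable g₂ volume (1/2) 1)
    (hpt : ∀ t ∈ Set.Ioo (0:ℝ) (1/2), ∀ s ∈ Set.Ioo (1/2:ℝ) 1, g₁ t * g₂ s ≤ g₂ t * g₁ s) :
    (∫ t in (0:ℝ)..(1/2), g₁ t) * (∫ s in (1/2:ℝ)..1, g₂ s) ≤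
    (∫ t in (0:ℝ)..(1/2), g₂ t) * (∫ s in (1/2:ℝ)..1, g₁ s) := by
  set C₁ := ∫ s in (1/2:ℝ)..1, g₁ s with hC₁
  set C₂ := ∫ s in (1/2:ℝ)..1, g₂ s with hC₂
  have step : ∀ t ∈ Set.Ioo (0:ℝ) (1/2), g₁ t * C₂ ≤ g₂ t * C₁ := by
    intro t ht
    rw [hC₁, hC₂, ← intervalIntegral.integral_const_mul, ← intervalIntegral.integral_const_mul]
    exact intervalIntegral.integral_mono_ae_restrict (by norm_num) (h2c.const_mul _)
      (h1c.const_mul _) (RIB.aeIoo (fun s hs => hpt t ht s hs))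
  calc (∫ t in (0:ℝ)..(1/2), g₁ t) * C₂ = ∫ t in (0:ℝ)..(1/2), g₁ t * C₂ := by
        rw [intervalIntegral.integral_mul_const]
    _ ≤ ∫ t in (0:ℝ)..(1/2), g₂ t * C₁ :=
        intervalIntegral.integral_mono_ae_restrict (by norm_num) (h1a.mul_const _)
          (h2a.mul_const _) (RIB.aeIoo step)
    _ = (∫ t in (0:ℝ)..(1/2), g₂ t) * C₁ := by rw [intervalIntegral.integral_mul_const]

lemma RIB.core {t s a₁ a₂ : ℝ} (ht : 0 < t) (hts : t ≤ s) (ha : a₁ ≤ a₂) :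
    t ^ (a₂ - 1) * s ^ (a₁ - 1) ≤ t ^ (a₁ - 1) * s ^ (a₂ - 1) := by
  have hs : 0 < s := lt_of_lt_of_le ht hts
  have e1 : t ^ (a₂ - 1) = t ^ (a₁ - 1) * t ^ (a₂ - a₁) := by
    rw [← Real.rpow_add ht]; ring_nf
  have e2 : s ^ (a₂ - 1) = s ^ (a₁ - 1) * s ^ (a₂ - a₁) := by
    rw [← Real.rpow_add hs]; ring_nf
  have rp : t ^ (a₂ - a₁) ≤ s ^ (a₂ - a₁) :=
    Real.rpow_le_rpow ht.le hts (by linarith)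
  have h3 : (0:ℝ) ≤ t ^ (a₁ - 1) * s ^ (a₁ - 1) := by positivity
  calc t ^ (a₂ - 1) * s ^ (a₁ - 1)
      = (t ^ (a₁ - 1) * s ^ (a₁ - 1)) * t ^ (a₂ - a₁) := by rw [e1]; ring
    _ ≤ (t ^ (a₁ - 1) * s ^ (a₁ - 1)) * s ^ (a₂ - a₁) :=
        mul_le_mul_of_nonneg_left rp h3
    _ = t ^ (a₁ - 1) * s ^ (a₂ - 1) := by rw [e2]; ring

lemma RIB.half_pos {a b : ℝ} (ha : 0 < a) (hb : 0 < b) :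
    0 < incBeta (1/2) a b := by
  rw [incBeta]
  refine intervalIntegral.intervalIntegral_pos_of_pos_on (RIB.intLeft ha) ?_ (by norm_num)
  intro x hx
  have h1 : (0:ℝ) < x := hx.1
  have h2 : (0:ℝ) < 1 - x := by have := hx.2; norm_num at this ⊢; linarith
  positivity

lemma RIB.right_pos {a b : ℝ} (ha : 0 < a) (hb : 0 < b) :
    0 < ∫ t in (1/2:ℝ)..1, t ^ (a - 1) * (1 - t) ^ (b - 1) := by
  refine intervalIntegral.intervalIntegral_pos_of_pos_on (RIB.intRight hb) ?_ (by norm_num)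
  intro x hx
  have h1 : (0:ℝ) < x := by have := hx.1; norm_num at this ⊢; linarith
  have h2 : (0:ℝ) < 1 - x := by have := hx.2; linarith
  positivity

lemma RIB.split {a b : ℝ} (ha : 0 < a) (hb : 0 < b) :
    incBeta 1 a b = incBeta (1/2) a b
      + ∫ t in (1/2:ℝ)..1, t ^ (a - 1) * (1 - t) ^ (b - 1) := by
  rw [incBeta, incBeta,
    intervalIntegral.integral_add_adjacent_intervals (RIB.intLeft ha) (RIB.intRight hb)]

end aux

/-- `I_{1/2}(a,b)` is nonincreasing in `a` and nondecreasing in `b`; consequently,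
for fixed total `T`, `s ↦ I_{1/2}(T−s, s)` is nondecreasing on `(0,T)`. -/
theorem regIncBeta_half_monotone :
    (∀ a₁ a₂ b : ℝ, 0 < a₁ → a₁ ≤ a₂ → 0 < b →
      regIncBeta (1/2) a₂ b ≤ regIncBeta (1/2) a₁ b) ∧
    (∀ a b₁ b₂ : ℝ, 0 < a → 0 < b₁ → b₁ ≤ b₂ →
      regIncBeta (1/2) a b₁ ≤ regIncBeta (1/2) a b₂) ∧
    (∀ T s₁ s₂ : ℝ, 0 < s₁ → s₁ ≤ s₂ → s₂ < T →
      regIncBeta (1/2) (T - s₁) s₁ ≤ regIncBeta (1/2) (T - s₂) s₂) := by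
  have part1 : ∀ a₁ a₂ b : ℝ, 0 < a₁ → a₁ ≤ a₂ → 0 < b →
      regIncBeta (1/2) a₂ b ≤ regIncBeta (1/2) a₁ b := by
    intro a₁ a₂ b ha₁ ha hb
    have ha₂ : 0 < a₂ := lt_of_lt_of_le ha₁ ha
    have hB₁ : 0 < incBeta 1 a₁ b := by
      rw [RIB.split ha₁ hb]; linarith [RIB.half_pos ha₁ hb, RIB.right_pos ha₁ hb]
    have hB₂ : 0 < incBeta 1 a₂ b := by
      rw [RIB.split ha₂ hb]; linarith [RIB.half_pos ha₂ hb, RIB.right_pos ha₂ hb]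
    rw [regIncBeta, regIncBeta, div_le_div_iff₀ hB₂ hB₁]
    rw [RIB.split ha₁ hb, RIB.split ha₂ hb]
    have kk := RIB.key (fun t : ℝ => t ^ (a₂ - 1) * (1 - t) ^ (b - 1))
      (fun t : ℝ => t ^ (a₁ - 1) * (1 - t) ^ (b - 1))
      (RIB.intLeft ha₂) (RIB.intRight hb) (RIB.intLeft ha₁) (RIB.intRight hb) ?_
    · have e : incBeta (1/2) a₂ b = ∫ t in (0:ℝ)..(1/2), t ^ (a₂-1) * (1-t) ^ (b-1) := rfl
      have e' : incBeta (1/2) a₁ b = ∫ t in (0:ℝ)..(1/2), t ^ (a₁-1) * (1-t) ^ (b-1) := rfl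
      rw [e, e'] at *
      nlinarith [kk]
    · intro t ht s hs
      have hts : t ≤ s := le_trans ht.2.le hs.1.le
      have h1t : (0:ℝ) < 1 - t := by have := ht.2; norm_num at this ⊢; linarith
      have h1s : (0:ℝ) < 1 - s := by linarith [hs.2]
      have c := RIB.core ht.1 hts ha
      have w : (0:ℝ) ≤ (1 - t) ^ (b - 1) * (1 - s) ^ (b - 1) := by positivity
      calc t ^ (a₂-1) * (1-t) ^ (b-1) * (s ^ (a₁-1) * (1-s) ^ (b-1))
          = (t ^ (a₂-1) * s ^ (a₁-1)) * ((1-t) ^ (b-1) * (1-s) ^ (b-1)) := by ring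
        _ ≤ (t ^ (a₁-1) * s ^ (a₂-1)) * ((1-t) ^ (b-1) * (1-s) ^ (b-1)) :=
            mul_le_mul_of_nonneg_right c w
        _ = t ^ (a₁-1) * (1-t) ^ (b-1) * (s ^ (a₂-1) * (1-s) ^ (b-1)) := by ring
  have part2 : ∀ a b₁ b₂ : ℝ, 0 < a → 0 < b₁ → b₁ ≤ b₂ →
      regIncBeta (1/2) a b₁ ≤ regIncBeta (1/2) a b₂ := by
    intro a b₁ b₂ ha hb₁ hb
    have hb₂ : 0 < b₂ := lt_of_lt_of_le hb₁ hb
    have hB₁ : 0 < incBeta 1 a b₁ := by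
      rw [RIB.split ha hb₁]; linarith [RIB.half_pos ha hb₁, RIB.right_pos ha hb₁]
    have hB₂ : 0 < incBeta 1 a b₂ := by
      rw [RIB.split ha hb₂]; linarith [RIB.half_pos ha hb₂, RIB.right_pos ha hb₂]
    rw [regIncBeta, regIncBeta, div_le_div_iff₀ hB₁ hB₂]
    rw [RIB.split ha hb₁, RIB.split ha hb₂]
    have kk := RIB.key (fun t : ℝ => t ^ (a - 1) * (1 - t) ^ (b₁ - 1))
      (fun t : ℝ => t ^ (a - 1) * (1 - t) ^ (b₂ - 1))
      (RIB.intLeft ha) (RIB.intRight hb₁) (RIB.intLeft ha) (RIB.intRight hb₂) ?_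
    · have e : incBeta (1/2) a b₁ = ∫ t in (0:ℝ)..(1/2), t ^ (a-1) * (1-t) ^ (b₁-1) := rfl
      have e' : incBeta (1/2) a b₂ = ∫ t in (0:ℝ)..(1/2), t ^ (a-1) * (1-t) ^ (b₂-1) := rfl
      rw [e, e'] at *
      nlinarith [kk]
    · intro t ht s hs
      have h1t : (0:ℝ) < 1 - t := by have := ht.2; norm_num at this ⊢; linarith
      have h1s : (0:ℝ) < 1 - s := by linarith [hs.2]
      have h1ts : 1 - s ≤ 1 - t := by have := ht.2; have := hs.1; norm_num at *; linarith
      have c := RIB.core h1s h1ts hb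
      have w : (0:ℝ) ≤ t ^ (a - 1) * s ^ (a - 1) := by
        have ht0 : (0:ℝ) < t := ht.1
        have hs0 : (0:ℝ) < s := by have := hs.1; norm_num at this; linarith
        positivity
      calc t ^ (a-1) * (1-t) ^ (b₁-1) * (s ^ (a-1) * (1-s) ^ (b₂-1))
          = ((1-s) ^ (b₂-1) * (1-t) ^ (b₁-1)) * (t ^ (a-1) * s ^ (a-1)) := by ring
        _ ≤ ((1-s) ^ (b₁-1) * (1-t) ^ (b₂-1)) * (t ^ (a-1) * s ^ (a-1)) :=
            mul_le_mul_of_nonneg_right c w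
        _ = t ^ (a-1) * (1-t) ^ (b₂-1) * (s ^ (a-1) * (1-s) ^ (b₁-1)) := by ring
  refine ⟨part1, part2, ?_⟩
  intro T s₁ s₂ h1 h12 h2T
  calc regIncBeta (1/2) (T - s₁) s₁ ≤ regIncBeta (1/2) (T - s₂) s₁ :=
        part1 (T - s₂) (T - s₁) s₁ (by linarith) (by linarith) h1
    _ ≤ regIncBeta (1/2) (T - s₂) s₂ := part2 (T - s₂) s₁ s₂ (by linarith) h1 h12
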